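/- There is an absolute constant C₀ > 0 such that for every K ≥ C₀ the following holds. Let ρ be a finite Borel measure on ℝ² and let Q be an axis-parallel square with ρ(Q) > 0. Suppose that there do not exist axis-parallel squares Q₁, Q₂ ⊆ Q with λ(Q₁) ≥ λ(Q)/100, λ(Q₂) ≥ λ(Q)/100, ρ(Q₁) ≥ ρ(Q)/K, ρ(Q₂) ≥ ρ(Q)/K, and dist(Q₁, Q₂) ≥ λ(Q)/100. Then Q contains an axis-parallel square Q' with λ(Q') ≤ λ(Q)/10 and ρ(Q') ≥ (1 − C₀/K)·ρ(Q). -/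

import Mathlib

open MeasureTheory
open scoped ENNReal

/-- The closed axis-parallel square with lower-left corner `z` and side length `l`. -/
def square (z : EuclideanSpace ℝ (Fin 2)) (l : ℝ) : Set (EuclideanSpace ℝ (Fin 2)) :=
  {x | ∀ i, z i ≤ x i ∧ x i ≤ z i + l}

lemma coord_le_dist (x y : EuclideanSpace ℝ (Fin 2)) (k : Fin 2) :
    |x k - y k| ≤ dist x y := by
  rw [EuclideanSpace.dist_eq, ← Real.sqrt_sq_eq_abs (x k - y k)]
  apply Real.sqrt_le_sqrt
  refine Finset.single_le_sum (f := fun i => dist (x i) (y i) ^ 2)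
    (fun i _ => by positivity) (Finset.mem_univ k) |>.trans_eq' ?_
  rw [Real.dist_eq, sq_abs]

lemma square_subset_square {z w : EuclideanSpace ℝ (Fin 2)} {l s : ℝ}
    (h : ∀ k, z k ≤ w k ∧ w k + s ≤ z k + l) : square w s ⊆ square z l :=
  fun x hx k => ⟨(h k).1.trans (hx k).1, (hx k).2.trans (h k).2⟩

lemma exists_idx {t s : ℝ} (hs : 0 < s) (h0 : 0 ≤ t) (h1 : t ≤ 100 * s) :
    ∃ i : ℕ, i < 100 ∧ (i : ℝ) * s ≤ t ∧ t ≤ ((i : ℝ) + 1) * s := by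
  refine ⟨min ⌊t / s⌋₊ 99, by omega, ?_, ?_⟩
  · have h2 : ((min ⌊t / s⌋₊ 99 : ℕ) : ℝ) ≤ t / s := by
      calc ((min ⌊t / s⌋₊ 99 : ℕ) : ℝ) ≤ (⌊t / s⌋₊ : ℝ) := by exact_mod_cast min_le_left _ _
        _ ≤ t / s := Nat.floor_le (by positivity)
    calc ((min ⌊t / s⌋₊ 99 : ℕ) : ℝ) * s ≤ (t / s) * s := by nlinarith
      _ = t := div_mul_cancel₀ _ hs.ne'
  · rcases le_or_gt ⌊t / s⌋₊ 99 with h | h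
    · have hmin : min ⌊t / s⌋₊ 99 = ⌊t / s⌋₊ := min_eq_left h
      rw [hmin]
      have h3 : t < ((⌊t / s⌋₊ : ℝ) + 1) * s := (div_lt_iff₀ hs).mp (Nat.lt_floor_add_one _)
      linarith
    · have hmin : min ⌊t / s⌋₊ 99 = 99 := min_eq_right (by omega)
      rw [hmin]; norm_num; linarith


set_option maxRecDepth 8000 in
set_option maxHeartbeats 1000000 in
/-- If a square `Q` of positive mass admits no pair of well-separated sub-squares of
side `≥ λ(Q)/100` and mass `≥ ρ(Q)/K`, then almost all of its mass concentrates in a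
sub-square of side `≤ λ(Q)/10`. -/
theorem bad_square_concentration :
    ∃ C₀ > (0 : ℝ), ∀ K : ℝ, C₀ ≤ K →
      ∀ ρ : Measure (EuclideanSpace ℝ (Fin 2)), IsFiniteMeasure ρ →
      ∀ (z : EuclideanSpace ℝ (Fin 2)) (l : ℝ), 0 < l → 0 < ρ (square z l) →
      (¬ ∃ (z₁ z₂ : EuclideanSpace ℝ (Fin 2)) (l₁ l₂ : ℝ),
          l / 100 ≤ l₁ ∧ l / 100 ≤ l₂ ∧
          square z₁ l₁ ⊆ square z l ∧ square z₂ l₂ ⊆ square z l ∧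
          ρ (square z l) / ENNReal.ofReal K ≤ ρ (square z₁ l₁) ∧
          ρ (square z l) / ENNReal.ofReal K ≤ ρ (square z₂ l₂) ∧
          ∀ x ∈ square z₁ l₁, ∀ y ∈ square z₂ l₂, l / 100 ≤ dist x y) →
      ∃ (z' : EuclideanSpace ℝ (Fin 2)) (l' : ℝ), 0 < l' ∧ l' ≤ l / 10 ∧
        square z' l' ⊆ square z l ∧
        ENNReal.ofReal (1 - C₀ / K) * ρ (square z l) ≤ ρ (square z' l') := by

  classical
  refine ⟨10000, by norm_num, ?_⟩
  intro K hK ρ hfin z l hl hpos hno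
  haveI := hfin
  set s : ℝ := l / 100 with hs_def
  have hs : 0 < s := by positivity
  have hl100 : l = 100 * s := by rw [hs_def]; ring
  set corner : ℕ → ℕ → EuclideanSpace ℝ (Fin 2) :=
    fun i j => (WithLp.toLp 2 (fun k => z k + (if k = 0 then (i : ℝ) else (j : ℝ)) * s) :
      EuclideanSpace ℝ (Fin 2)) with hcorner
  have corner_apply : ∀ i j k, corner i j k = z k + (if k = 0 then (i : ℝ) else (j : ℝ)) * s :=
    fun _ _ _ => rfl
  set cell : ℕ → ℕ → Set (EuclideanSpace ℝ (Fin 2)) := fun i j => square (corner i j) s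
    with hcell
  -- cells are inside Q
  have cell_sub : ∀ i j : ℕ, i < 100 → j < 100 → cell i j ⊆ square z l := by
    intro i j hi hj
    apply square_subset_square
    intro k
    have hcnn : (0:ℝ) ≤ (if k = 0 then (i : ℝ) else (j : ℝ)) * s := by positivity
    have hc99 : (if k = 0 then (i : ℝ) else (j : ℝ)) ≤ 99 := by
      split
      · exact_mod_cast Nat.lt_succ_iff.mp hi
      · exact_mod_cast Nat.lt_succ_iff.mp hj
    rw [corner_apply]
    constructor
    · linarith
    · rw [hl100]; nlinarith
  -- every point of Q is in some cell
  have cover : ∀ x ∈ square z l, ∃ i j : ℕ, i < 100 ∧ j < 100 ∧ x ∈ cell i j := by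
    intro x hx
    obtain ⟨i, hi, hi1, hi2⟩ := exists_idx hs (t := x 0 - z 0)
      (by linarith [(hx 0).1]) (by have := (hx 0).2; linarith)
    obtain ⟨j, hj, hj1, hj2⟩ := exists_idx hs (t := x 1 - z 1)
      (by linarith [(hx 1).1]) (by have := (hx 1).2; linarith)
    have htwo : ∀ k : Fin 2, k = 0 ∨ k = 1 := by decide
    refine ⟨i, j, hi, hj, fun k => ?_⟩
    rw [corner_apply]
    rcases htwo k with rfl | rfl
    · rw [if_pos rfl]
      constructor <;> linarith
    · rw [if_neg (by decide)]
      constructor <;> linarith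
  set grid : Finset (ℕ × ℕ) := Finset.range 100 ×ˢ Finset.range 100 with hgrid
  set H : Finset (ℕ × ℕ) :=
    grid.filter (fun p => ρ (square z l) / ENNReal.ofReal K ≤ ρ (cell p.1 p.2)) with hH
  have Hmem : ∀ p ∈ H, p.1 < 100 ∧ p.2 < 100 ∧
      ρ (square z l) / ENNReal.ofReal K ≤ ρ (cell p.1 p.2) := by
    intro p hp
    have h1 := Finset.mem_filter.mp hp
    have h2 := Finset.mem_product.mp h1.1
    exact ⟨Finset.mem_range.mp h2.1, Finset.mem_range.mp h2.2, h1.2⟩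
  -- separation lemmas
  have sep0 : ∀ i j i' j' : ℕ, i + 2 ≤ i' →
      ∀ x ∈ cell i j, ∀ y ∈ cell i' j', l / 100 ≤ dist x y := by
    intro i j i' j' hii x hx y hy
    have h1 : x 0 ≤ z 0 + ((i:ℝ) + 1) * s := by
      have := (hx 0).2; rw [corner_apply, if_pos rfl] at this; linarith
    have h2 : z 0 + (i':ℝ) * s ≤ y 0 := by
      have := (hy 0).1; rw [corner_apply, if_pos rfl] at this; linarith
    have h3 : (i:ℝ) + 2 ≤ (i':ℝ) := by exact_mod_cast hii
    have h4 : s ≤ |x 0 - y 0| := by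
      have : s ≤ y 0 - x 0 := by nlinarith
      calc s ≤ y 0 - x 0 := this
        _ ≤ |y 0 - x 0| := le_abs_self _
        _ = |x 0 - y 0| := abs_sub_comm _ _
    calc l / 100 = s := rfl
      _ ≤ |x 0 - y 0| := h4
      _ ≤ dist x y := coord_le_dist x y 0
  have sep1 : ∀ i j i' j' : ℕ, j + 2 ≤ j' →
      ∀ x ∈ cell i j, ∀ y ∈ cell i' j', l / 100 ≤ dist x y := by
    intro i j i' j' hjj x hx y hy
    have h1 : x 1 ≤ z 1 + ((j:ℝ) + 1) * s := by
      have := (hx 1).2; rw [corner_apply, if_neg (by decide)] at this; linarith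
    have h2 : z 1 + (j':ℝ) * s ≤ y 1 := by
      have := (hy 1).1; rw [corner_apply, if_neg (by decide)] at this; linarith
    have h3 : (j:ℝ) + 2 ≤ (j':ℝ) := by exact_mod_cast hjj
    have h4 : s ≤ |x 1 - y 1| := by
      have : s ≤ y 1 - x 1 := by nlinarith
      calc s ≤ y 1 - x 1 := this
        _ ≤ |y 1 - x 1| := le_abs_self _
        _ = |x 1 - y 1| := abs_sub_comm _ _
    calc l / 100 = s := rfl
      _ ≤ |x 1 - y 1| := h4
      _ ≤ dist x y := coord_le_dist x y 1
  -- heavy cells are close to each other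
  have noSep : ∀ p ∈ H, ∀ q ∈ H, p.1 ≤ q.1 + 1 ∧ p.2 ≤ q.2 + 1 := by
    intro p hp q hq
    obtain ⟨hp1, hp2, hpm⟩ := Hmem p hp
    obtain ⟨hq1, hq2, hqm⟩ := Hmem q hq
    by_contra hcon
    have hsplit : q.1 + 2 ≤ p.1 ∨ q.2 + 2 ≤ p.2 := by omega
    apply hno
    rcases hsplit with h | h
    · exact ⟨corner q.1 q.2, corner p.1 p.2, s, s, le_refl _, le_refl _,
        cell_sub _ _ hq1 hq2, cell_sub _ _ hp1 hp2, hqm, hpm,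
        sep0 q.1 q.2 p.1 p.2 h⟩
    · exact ⟨corner q.1 q.2, corner p.1 p.2, s, s, le_refl _, le_refl _,
        cell_sub _ _ hq1 hq2, cell_sub _ _ hp1 hp2, hqm, hpm,
        sep1 q.1 q.2 p.1 p.2 h⟩
  set A : Set ℕ := {i | ∃ j, (i, j) ∈ H} with hA
  set B : Set ℕ := {j | ∃ i, (i, j) ∈ H} with hB
  set a : ℕ := sInf A with ha
  set b : ℕ := sInf B with hb
  have hbound : ∀ p ∈ H, a ≤ p.1 ∧ p.1 ≤ a + 1 ∧ b ≤ p.2 ∧ p.2 ≤ b + 1 := by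
    intro p hp
    have hpm : (p.1, p.2) ∈ H := by simpa using hp
    have hAm : p.1 ∈ A := ⟨p.2, hpm⟩
    have hBm : p.2 ∈ B := ⟨p.1, hpm⟩
    have haA : a ∈ A := Nat.sInf_mem ⟨p.1, hAm⟩
    have hbB : b ∈ B := Nat.sInf_mem ⟨p.2, hBm⟩
    obtain ⟨j₀, hj₀⟩ := haA
    obtain ⟨i₀, hi₀⟩ := hbB
    exact ⟨Nat.sInf_le hAm, (noSep p hp (a, j₀) hj₀).1, Nat.sInf_le hBm,
      (noSep p hp (i₀, b) hi₀).2⟩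
  set a' : ℕ := min a 98 with ha'
  set b' : ℕ := min b 98 with hb'
  refine ⟨corner a' b', 2 * s, by positivity, by rw [hs_def]; linarith, ?_, ?_⟩
  · -- Q' ⊆ Q
    apply square_subset_square
    intro k
    have hcnn : (0:ℝ) ≤ (if k = 0 then (a' : ℝ) else (b' : ℝ)) * s := by positivity
    have hc98 : (if k = 0 then (a' : ℝ) else (b' : ℝ)) ≤ 98 := by
      split
      · exact_mod_cast min_le_right a 98
      · exact_mod_cast min_le_right b 98
    rw [corner_apply]
    constructor
    · linarith
    · rw [hl100]; nlinarith
  · -- mass bound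
    have hsubQ' : ∀ p ∈ H, cell p.1 p.2 ⊆ square (corner a' b') (2 * s) := by
      intro p hp
      obtain ⟨h1, h2, h3, h4⟩ := hbound p hp
      obtain ⟨h5, h6, -⟩ := Hmem p hp
      apply square_subset_square
      intro k
      rw [corner_apply, corner_apply]
      have hlow : ((if k = 0 then (a' : ℝ) else (b' : ℝ))) ≤
          (if k = 0 then (p.1 : ℝ) else (p.2 : ℝ)) := by
        split
        · exact_mod_cast (by omega : a' ≤ p.1)
        · exact_mod_cast (by omega : b' ≤ p.2)
      have hhigh : (if k = 0 then (p.1 : ℝ) else (p.2 : ℝ)) ≤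
          (if k = 0 then (a' : ℝ) else (b' : ℝ)) + 1 := by
        split
        · have : p.1 ≤ a' + 1 := by omega
          exact_mod_cast this
        · have : p.2 ≤ b' + 1 := by omega
          exact_mod_cast this
      constructor
      · nlinarith
      · nlinarith
    have hQsub : square z l ⊆ square (corner a' b') (2 * s) ∪
        ⋃ p ∈ grid \ H, cell p.1 p.2 := by
      intro x hx
      obtain ⟨i, j, hi, hj, hmem⟩ := cover x hx
      by_cases hh : (i, j) ∈ H
      · exact Or.inl (hsubQ' (i, j) hh hmem)
      · have hmemgrid : ((i, j) : ℕ × ℕ) ∈ grid \ H := Finset.mem_sdiff.mpr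
          ⟨Finset.mem_product.mpr ⟨Finset.mem_range.mpr hi, Finset.mem_range.mpr hj⟩, hh⟩
        exact Or.inr (Set.mem_iUnion₂.mpr ⟨(i, j), hmemgrid, hmem⟩)
    have hmass : ρ (square z l) ≤ ρ (square (corner a' b') (2 * s)) +
        10000 * (ρ (square z l) / ENNReal.ofReal K) := by
      calc ρ (square z l)
          ≤ ρ (square (corner a' b') (2 * s) ∪ ⋃ p ∈ grid \ H, cell p.1 p.2) :=
            measure_mono hQsub
        _ ≤ ρ (square (corner a' b') (2 * s)) + ρ (⋃ p ∈ grid \ H, cell p.1 p.2) :=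
            measure_union_le _ _
        _ ≤ ρ (square (corner a' b') (2 * s)) + ∑ p ∈ grid \ H, ρ (cell p.1 p.2) := by
            gcongr
            exact measure_biUnion_finset_le _ _
        _ ≤ ρ (square (corner a' b') (2 * s)) +
              ∑ _p ∈ grid \ H, ρ (square z l) / ENNReal.ofReal K := by
            gcongr with p hp
            have hmemp := Finset.mem_sdiff.mp hp
            have : ¬ (ρ (square z l) / ENNReal.ofReal K ≤ ρ (cell p.1 p.2)) := fun hc =>
              hmemp.2 (Finset.mem_filter.mpr ⟨hmemp.1, hc⟩)
            exact le_of_not_ge this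
        _ ≤ ρ (square (corner a' b') (2 * s)) +
              10000 * (ρ (square z l) / ENNReal.ofReal K) := by
            gcongr
            rw [Finset.sum_const]
            have hcard : (grid \ H).card ≤ 10000 := by
              calc (grid \ H).card ≤ grid.card := Finset.card_le_card (Finset.sdiff_subset)
                _ = 10000 := by rw [hgrid, Finset.card_product, Finset.card_range]
            calc (grid \ H).card • (ρ (square z l) / ENNReal.ofReal K)
                ≤ 10000 • (ρ (square z l) / ENNReal.ofReal K) :=
                  nsmul_le_nsmul_left (by positivity) hcard
              _ = 10000 * (ρ (square z l) / ENNReal.ofReal K) := by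
                  rw [nsmul_eq_mul]; norm_num
    -- final arithmetic
    have hKpos : (0:ℝ) < K := lt_of_lt_of_le (by norm_num) hK
    have hc1 : (0:ℝ) ≤ 10000 / K := by positivity
    have hc2 : (0:ℝ) ≤ 1 - 10000 / K := by
      rw [sub_nonneg]
      exact (div_le_one hKpos).mpr hK
    have hfinite : ρ (square z l) ≠ ∞ := measure_ne_top ρ _
    have key : ENNReal.ofReal (10000 / K) * ρ (square z l) =
        10000 * (ρ (square z l) / ENNReal.ofReal K) := by
      rw [ENNReal.ofReal_div_of_pos hKpos]
      rw [div_eq_mul_inv, div_eq_mul_inv]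
      have h4 : ENNReal.ofReal (10000:ℝ) = (10000 : ℝ≥0∞) := by
        norm_num
      rw [h4]; ring
    have hne : ENNReal.ofReal (10000 / K) * ρ (square z l) ≠ ∞ :=
      ENNReal.mul_ne_top ENNReal.ofReal_ne_top hfinite
    rw [← ENNReal.add_le_add_iff_right hne]
    have hsplit : ENNReal.ofReal (1 - 10000 / K) * ρ (square z l) +
        ENNReal.ofReal (10000 / K) * ρ (square z l) = ρ (square z l) := by
      rw [← add_mul, ← ENNReal.ofReal_add hc2 hc1, sub_add_cancel, ENNReal.ofReal_one, one_mul]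
    rw [hsplit, key]
    exact hmass
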